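/- Let B be an N×N strongly infinitely divisible nonnegative matrix and Q a Z-matrix with exp(−Q) = B. If i ≠ j and B_{ij} = 0, then (Q^n)_{ij} = 0 for every positive integer n. -/

import Mathlib

open Matrix
open NormedSpace

/-- A real square matrix is (entrywise) nonnegative if all of its entries are nonnegative. -/
def IsNonnegMatrix {ι : Type*} (B : Matrix ι ι ℝ) : Prop :=
  ∀ i j, 0 ≤ B i j

/-- A Z-matrix is a real square matrix all of whose off-diagonal entries are nonpositive. -/
def IsZMatrix {ι : Type*} (Q : Matrix ι ι ℝ) : Prop :=
  ∀ i j, i ≠ j → Q i j ≤ 0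

/-- A nonnegative matrix `B` is infinitely divisible if for every positive integer `n`
there exists a nonnegative matrix `K` with `K ^ n = B`. -/
def IsInfinitelyDivisible {ι : Type*} [Fintype ι] [DecidableEq ι] (B : Matrix ι ι ℝ) : Prop :=
  ∀ n : ℕ, 0 < n → ∃ K : Matrix ι ι ℝ, IsNonnegMatrix K ∧ K ^ n = B

/-- `B` is strongly infinitely divisible if it is infinitely divisible and `det B > 0`. -/
def IsStronglyInfinitelyDivisible {ι : Type*} [Fintype ι] [DecidableEq ι]
    (B : Matrix ι ι ℝ) : Prop :=
  IsInfinitelyDivisible B ∧ 0 < B.det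

/-- An inverse M-matrix is an invertible nonnegative matrix whose inverse is a Z-matrix. -/
def IsInverseMMatrix {ι : Type*} [Fintype ι] [DecidableEq ι] (K : Matrix ι ι ℝ) : Prop :=
  IsUnit K.det ∧ IsNonnegMatrix K ∧ IsZMatrix K⁻¹

/-- A stochastic matrix is a nonnegative square matrix each of whose rows sums to `1`. -/
def IsStochasticMatrix {ι : Type*} [Fintype ι] (P : Matrix ι ι ℝ) : Prop :=
  IsNonnegMatrix P ∧ ∀ i, ∑ j, P i j = 1

/-- An intensity matrix is a real square matrix whose off-diagonal entries are nonnegative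
and each of whose rows sums to `0`. -/
def IsIntensityMatrix {ι : Type*} [Fintype ι] (R : Matrix ι ι ℝ) : Prop :=
  (∀ i j, i ≠ j → 0 ≤ R i j) ∧ ∀ i, ∑ j, R i j = 0


private lemma matrix_exp_entry_hasSum {N : ℕ} (M : Matrix (Fin N) (Fin N) ℝ) (i j : Fin N) :
    HasSum (fun n : ℕ => (n.factorial⁻¹ : ℝ) * (M ^ n) i j) ((exp M) i j) := by
  letI : SeminormedRing (Matrix (Fin N) (Fin N) ℝ) := Matrix.linftyOpSemiNormedRing
  letI : NormedRing (Matrix (Fin N) (Fin N) ℝ) := Matrix.linftyOpNormedRing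
  letI : NormedAlgebra ℝ (Matrix (Fin N) (Fin N) ℝ) := Matrix.linftyOpNormedAlgebra
  have h := exp_series_hasSum_exp' (𝕂 := ℝ) M
  have hc : Continuous fun A : Matrix (Fin N) (Fin N) ℝ => A i j :=
    (continuous_apply j).comp (continuous_apply i)
  have h2 := h.map (Matrix.entryLinearMap ℝ ℝ i j) hc
  simp only [Matrix.entryLinearMap_apply, Function.comp_def, Matrix.smul_apply, smul_eq_mul] at h2
  exact h2

private lemma mul_nonneg_entries {N : ℕ} {A B : Matrix (Fin N) (Fin N) ℝ}
    (hA : ∀ i j, 0 ≤ A i j) (hB : ∀ i j, 0 ≤ B i j) : ∀ i j, 0 ≤ (A * B) i j := by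
  intro i j
  rw [Matrix.mul_apply]
  exact Finset.sum_nonneg fun k _ => mul_nonneg (hA i k) (hB k j)

theorem stmt9 (N : ℕ) (B Q : Matrix (Fin N) (Fin N) ℝ) (hBnn : IsNonnegMatrix B)
    (hBdiv : IsStronglyInfinitelyDivisible B) (hQ : IsZMatrix Q)
    (hQB : NormedSpace.exp (-Q) = B)
    (i j : Fin N) (hij : i ≠ j) (hB0 : B i j = 0) :
    ∀ n : ℕ, 0 < n → (Q ^ n) i j = 0 := by
  clear hBnn hBdiv
  have hQ' : ∀ a b, a ≠ b → Q a b ≤ 0 := hQ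
  clear hQ
  set c : ℝ := ∑ k, |Q k k| with hc
  have hcd : ∀ k, Q k k ≤ c := by
    intro k
    calc Q k k ≤ |Q k k| := le_abs_self _
    _ ≤ c := Finset.single_le_sum (f := fun k => |Q k k|) (fun _ _ => abs_nonneg _)
        (Finset.mem_univ k)
  set M : Matrix (Fin N) (Fin N) ℝ := c • (1 : Matrix (Fin N) (Fin N) ℝ) - Q with hM
  have hMnn : ∀ a b, 0 ≤ M a b := by
    intro a b
    rcases eq_or_ne a b with rfl | hab
    · simp [hM, Matrix.one_apply_eq, sub_nonneg, hcd a]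
    · simp [hM, Matrix.one_apply_ne hab]
      exact hQ' a b hab
  have hMpow : ∀ n : ℕ, ∀ a b, 0 ≤ (M ^ n) a b := by
    intro n
    induction n with
    | zero => intro a b; rcases eq_or_ne a b with rfl | hab <;>
        simp [Matrix.one_apply_eq, Matrix.one_apply_ne, *]
    | succ n ih => rw [pow_succ]; exact mul_nonneg_entries ih hMnn
  -- exp of M
  have hsplit : M = c • (1 : Matrix (Fin N) (Fin N) ℝ) + (-Q) := by
    rw [hM, sub_eq_add_neg]
  have hcomm : Commute (c • (1 : Matrix (Fin N) (Fin N) ℝ)) (-Q) :=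
    (Commute.one_left (-Q)).smul_left c
  have hexpsmul : exp (c • (1 : Matrix (Fin N) (Fin N) ℝ)) = Real.exp c • 1 := by
    letI : SeminormedRing (Matrix (Fin N) (Fin N) ℝ) := Matrix.linftyOpSemiNormedRing
    letI : NormedRing (Matrix (Fin N) (Fin N) ℝ) := Matrix.linftyOpNormedRing
    letI : NormedAlgebra ℝ (Matrix (Fin N) (Fin N) ℝ) := Matrix.linftyOpNormedAlgebra
    have h := algebraMap_exp_comm (𝕂 := ℝ) (𝔸 := Matrix (Fin N) (Fin N) ℝ) c
    rw [Algebra.algebraMap_eq_smul_one, Algebra.algebraMap_eq_smul_one] at h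
    rw [Real.exp_eq_exp_ℝ]; exact h.symm
  have hexpM : exp M = Real.exp c • B := by
    rw [hsplit, Matrix.exp_add_of_commute _ _ hcomm, hQB, hexpsmul, smul_mul_assoc,
      one_mul]
  have hexp0 : (exp M) i j = 0 := by rw [hexpM, Matrix.smul_apply, hB0, smul_zero]
  have hsum := matrix_exp_entry_hasSum M i j
  rw [hexp0] at hsum
  have hzero : ∀ n : ℕ, (M ^ n) i j = 0 := by
    intro n
    have hle : ((n.factorial : ℝ)⁻¹) * (M ^ n) i j ≤ 0 :=
      le_hasSum hsum n fun m _ => mul_nonneg (by positivity) (hMpow m i j)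
    have hge : 0 ≤ ((n.factorial : ℝ)⁻¹) * (M ^ n) i j :=
      mul_nonneg (by positivity) (hMpow n i j)
    have := le_antisymm hle hge
    have hfac : ((n.factorial : ℝ)⁻¹) ≠ 0 := by positivity
    exact (mul_eq_zero.mp this).resolve_left hfac
  -- Q as polynomial in M
  have hQpoly : Q = (Polynomial.aeval M) (Polynomial.C c - Polynomial.X) := by
    rw [map_sub, Polynomial.aeval_X, Polynomial.aeval_C, Algebra.algebraMap_eq_smul_one, hM,
      sub_sub_cancel]
  intro n _
  rw [hQpoly, ← map_pow, Polynomial.aeval_eq_sum_range]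
  rw [Matrix.sum_apply]
  refine Finset.sum_eq_zero fun m _ => ?_
  rw [Matrix.smul_apply, hzero m, smul_zero]
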